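/- Let n ∈ ℕ be even, let r be sampled uniformly at random from E_n = {v ∈ {-1,1}^n : #₁(v) even}, let x ∈ {-1,1}^n, and let t ∈ ℤ be such that 2t lies in the support of ⟨r,x⟩. Then Pr[⟨r,x⟩ = 2t] = C(n, n/2 + t) / 2^{n-1}. -/

import Mathlib

open Finset

/-- The ±1 value associated with a boolean. -/
def sgn (b : Bool) : ℤ := if b then 1 else -1

/-- The set of "even" sign vectors: those with an even number of +1 entries. -/
def evenVecs (n : ℕ) : Finset (Fin n → Bool) :=
  univ.filter fun r => Even ((univ.filter fun i => r i = true).card)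

/-- Binomial coefficient with an integer lower argument, interpreted as 0
when the argument is negative. -/
def chooseZ (n : ℕ) (k : ℤ) : ℕ := if 0 ≤ k then n.choose k.toNat else 0


def ctrue {n : ℕ} (r : Fin n → Bool) : ℕ := (univ.filter fun i => r i = true).card

lemma ctrue_cast {n} (r : Fin n → Bool) :
    ((ctrue r : ℕ) : ZMod 2) = ∑ i, (if r i then (1:ZMod 2) else 0) := by
  rw [ctrue, card_filter]
  push_cast
  simp

lemma even_iff_zmod {m : ℕ} : Even m ↔ ((m : ZMod 2) = 0) := by
  rw [ZMod.natCast_eq_zero_iff]; exact even_iff_two_dvd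

lemma ctrue_update_flip {n} (r : Fin n → Bool) (j : Fin n) :
    ((ctrue (Function.update r j (!r j)) : ZMod 2)) = (ctrue r : ZMod 2) + 1 := by
  rw [ctrue_cast, ctrue_cast]
  rw [← Finset.add_sum_erase _ _ (mem_univ j), ← Finset.add_sum_erase _ _ (mem_univ j)]
  have h1 : ∀ i ∈ univ.erase j, (if Function.update r j (!r j) i then (1:ZMod 2) else 0)
      = (if r i then (1:ZMod 2) else 0) := by
    intro i hi
    rw [Function.update_of_ne (Finset.ne_of_mem_erase hi)]
  rw [Finset.sum_congr rfl h1, Function.update_self]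
  have h2 : (2:ZMod 2) = 0 := by decide
  cases h : r j <;> simp
  · ring
  · rw [show (1:ZMod 2) + ↑(#(filter (fun x => r x = true) (univ.erase j))) + 1 = ↑(#(filter (fun x => r x = true) (univ.erase j))) + 2 by ring, h2, add_zero]

lemma mem_evenVecs {n} {r : Fin n → Bool} : r ∈ evenVecs n ↔ Even (ctrue r) := by
  simp [evenVecs, ctrue]

lemma update_flip_flip {n} (r : Fin n → Bool) (j : Fin n) :
    Function.update (Function.update r j (!r j)) j (!(Function.update r j (!r j)) j) = r := by
  simp [Function.update_self, Function.update_idem]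

lemma card_evenVecs (n : ℕ) : (evenVecs n).card = 2^(n-1) := by
  rcases Nat.eq_zero_or_pos n with h0 | hpos
  · subst h0
    rw [show (evenVecs 0) = univ by ext r; simp [mem_evenVecs, ctrue]; exact Subsingleton.elim _ _]
    simp
  · set j : Fin n := ⟨0, hpos⟩
    have key : (evenVecs n).card = ((univ : Finset (Fin n → Bool)) \ evenVecs n).card := by
      apply card_nbij' (fun r => Function.update r j (!r j)) (fun r => Function.update r j (!r j))
      · intro r hr
        rw [mem_coe, mem_sdiff]
        refine ⟨mem_univ _, ?_⟩
        rw [mem_evenVecs, even_iff_zmod, ctrue_update_flip,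
          (even_iff_zmod.1 (mem_evenVecs.1 hr))]
        decide
      · intro r hr
        rw [mem_coe, mem_sdiff, mem_evenVecs, even_iff_zmod] at hr
        rw [mem_coe, mem_evenVecs, even_iff_zmod, ctrue_update_flip]
        have := hr.2
        revert this
        generalize ((ctrue r : ZMod 2)) = a
        revert a; decide
      · intro r _; exact update_flip_flip r j
      · intro r _; exact update_flip_flip r j
    have hcu : ((univ : Finset (Fin n → Bool))).card = 2^n := by
      simp
    have hsd : ((univ : Finset (Fin n → Bool)) \ evenVecs n).card
        = 2^n - (evenVecs n).card := by
      rw [card_sdiff_of_subset (subset_univ _), hcu]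
    have hle : (evenVecs n).card ≤ 2^n := hcu ▸ card_le_card (subset_univ _)
    have hpow : 2^n = 2 * 2^(n-1) := by
      rw [← pow_succ']
      congr 1
      omega
    omega

lemma card_ctrue_eq (n k : ℕ) :
    ((univ : Finset (Fin n → Bool)).filter fun s => ctrue s = k).card = n.choose k := by
  have : n.choose k = ((univ : Finset (Fin n)).powersetCard k).card := by
    rw [card_powersetCard, card_univ, Fintype.card_fin]
  rw [this]
  apply card_nbij' (fun s => univ.filter fun i => s i = true)
    (fun A => fun i => decide (i ∈ A))
  · intro s hs
    rw [mem_coe, mem_filter] at hs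
    rw [mem_coe, mem_powersetCard]
    exact ⟨subset_univ _, hs.2⟩
  · intro A hA
    rw [mem_coe, mem_powersetCard] at hA
    rw [mem_coe, mem_filter]
    refine ⟨mem_univ _, ?_⟩
    rw [ctrue]
    simp only [decide_eq_true_eq]
    rw [filter_univ_mem]
    exact hA.2
  · intro s _
    funext i
    simp
  · intro A _
    simp only [decide_eq_true_eq]
    exact filter_univ_mem A


/-- For n even, r uniform on E_n, x ∈ {-1,1}^n and t ∈ ℤ with 2t in
the support of ⟨r,x⟩, we have Pr[⟨r,x⟩ = 2t] = C(n, n/2 + t) / 2^(n-1). -/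
theorem prob_inner_eq_two_t {n : ℕ} (hn : Even n) (x : Fin n → ℤ)
    (hx : ∀ i, x i = 1 ∨ x i = -1) (t : ℤ)
    (hsupp : ∃ r ∈ evenVecs n, ∑ i, sgn (r i) * x i = 2 * t) :
    (((evenVecs n).filter fun r => ∑ i, sgn (r i) * x i = 2 * t).card : ℝ) /
        ((evenVecs n).card : ℝ) =
      (chooseZ n ((n : ℤ) / 2 + t) : ℝ) / 2 ^ (n - 1) := by
  classical
  set b : Fin n → Bool := fun i => decide (x i = 1) with hb
  set cm : (Fin n → Bool) → ℕ := fun r => (univ.filter fun i => r i = b i).card with hcm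
  -- sum formula
  have hsum : ∀ r : Fin n → Bool, ∑ i, sgn (r i) * x i = 2 * (cm r : ℤ) - n := by
    intro r
    have hpt : ∀ i, sgn (r i) * x i = 2 * (if r i = b i then (1:ℤ) else 0) - 1 := by
      intro i
      rcases hx i with h | h <;> cases hr : r i <;>
        simp [sgn, h, hb, hr] <;> norm_num
    rw [Finset.sum_congr rfl (fun i _ => hpt i), Finset.sum_sub_distrib,
      ← Finset.mul_sum, Finset.sum_boole, Finset.sum_const, card_univ,
      Fintype.card_fin, nsmul_eq_mul, mul_one]
  -- parity formula
  have hpar : ∀ r : Fin n → Bool, (ctrue r : ZMod 2)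
      = ((cm r : ℕ) : ZMod 2) + ∑ i, (if b i then (0:ZMod 2) else 1) := by
    intro r
    rw [ctrue_cast]
    simp only [hcm]
    rw [card_filter, Nat.cast_sum, ← Finset.sum_add_distrib]
    apply Finset.sum_congr rfl
    intro i _
    cases hbi : b i <;> cases hri : r i <;> simp [hbi, hri] <;> decide
  obtain ⟨m, hm⟩ := hn
  obtain ⟨r0, hr0e, hr0s⟩ := hsupp
  set k : ℕ := cm r0 with hk
  have hk0 : (k : ℤ) = (n : ℤ) / 2 + t := by
    have := hsum r0
    rw [hr0s] at this
    have hmn : (n : ℤ) = (m : ℤ) + (m : ℤ) := by rw [hm]; push_cast; ring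
    omega
  -- the filter over evenVecs equals the filter over univ
  have hcmk : ∀ r : Fin n → Bool, (∑ i, sgn (r i) * x i = 2 * t) ↔ cm r = k := by
    intro r
    rw [hsum r]
    constructor
    · intro h
      have := hsum r0
      rw [hr0s] at this
      have : (cm r : ℤ) = (k : ℤ) := by omega
      exact_mod_cast this
    · intro h
      have := hsum r0
      rw [hr0s] at this
      omega
  have hfeq : ((evenVecs n).filter fun r => ∑ i, sgn (r i) * x i = 2 * t)
      = ((univ : Finset (Fin n → Bool)).filter fun r => ∑ i, sgn (r i) * x i = 2 * t) := by
    ext r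
    simp only [mem_filter, mem_univ, true_and, and_iff_right_iff_imp]
    intro hr
    rw [mem_evenVecs, even_iff_zmod, hpar r, (hcmk r).1 hr]
    have h0 : ((ctrue r0 : ℕ) : ZMod 2) = 0 := even_iff_zmod.1 (mem_evenVecs.1 hr0e)
    rw [hpar r0] at h0
    exact h0
  -- count
  have hcount : (((univ : Finset (Fin n → Bool)).filter
      fun r => ∑ i, sgn (r i) * x i = 2 * t).card) = n.choose k := by
    rw [Finset.filter_congr (fun r _ => hcmk r), ← card_ctrue_eq n k]
    apply card_nbij' (fun r => fun i => r i == b i) (fun s => fun i => s i == b i)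
    · intro r hr
      rw [mem_coe, mem_filter] at hr ⊢
      refine ⟨mem_univ _, ?_⟩
      have heq : (univ.filter fun i => (r i == b i) = true)
          = univ.filter fun i => r i = b i := by
        apply filter_congr; intro i _; simp
      rw [ctrue, heq]
      exact hr.2
    · intro s hs
      rw [mem_coe, mem_filter] at hs ⊢
      refine ⟨mem_univ _, ?_⟩
      simp only [hcm]
      have heq : (univ.filter fun i => (s i == b i) = b i)
          = univ.filter fun i => s i = true := by
        apply filter_congr; intro i _
        cases hsi : s i <;> cases hbi : b i <;> simp [hsi, hbi]
      rw [heq]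
      exact hs.2
    · intro r _
      funext i
      cases hri : r i <;> cases hbi : b i <;> simp [hri, hbi]
    · intro s _
      funext i
      cases hsi : s i <;> cases hbi : b i <;> simp [hsi, hbi]
  have hch : chooseZ n ((n : ℤ) / 2 + t) = n.choose k := by
    rw [← hk0]
    simp [chooseZ]
  rw [hfeq, hcount, card_evenVecs, hch]
  push_cast
  ring
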